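/- Let ρ^{AB} = ∑_i p_i |ψ_i⟩⟨ψ_i| be any pure-state decomposition of a bipartite density operator ρ^{AB}. Then F_k(ρ^{AB}) ≥ ∑_i p_i F_k(ψ_i), where F_k(σ) = max over states τ in the convex hull of pure states of Schmidt rank at most k of the fidelity F(σ, τ). -/

import Mathlib

open Matrix ComplexOrder

/-- The projector `|v⟩⟨v|` onto a vector `v` (as a matrix). -/
noncomputable def outer {n : Type*} [Fintype n] (v : n → ℂ) : Matrix n n ℂ :=
  Matrix.vecMulVec v (star v)

/-- Coefficient matrix of a bipartite vector. -/
noncomputable def coeffMat {dA dB : ℕ} (v : Fin dA × Fin dB → ℂ) :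
    Matrix (Fin dA) (Fin dB) ℂ :=
  Matrix.of fun i j => v (i, j)

/-- The square root of a positive semidefinite matrix, as `Matrix.PosSemidef.sqrt` was defined
in Mathlib of December 2024 (via the eigendecomposition). -/
noncomputable def posSemidefSqrt {n : Type*} [Fintype n] [DecidableEq n] {A : Matrix n n ℂ}
    (hA : A.PosSemidef) : Matrix n n ℂ :=
  hA.1.eigenvectorUnitary.1 * diagonal ((↑) ∘ (√·) ∘ hA.1.eigenvalues) *
    (star hA.1.eigenvectorUnitary : Matrix n n ℂ)

open Classical in
/-- Fidelity `F(ρ,σ) = (Tr √(√ρ σ √ρ))²` between (positive semidefinite) operators. -/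
noncomputable def fidelity {n : Type*} [Fintype n] [DecidableEq n]
    (ρ σ : Matrix n n ℂ) : ℝ :=
  if h : ρ.PosSemidef ∧ σ.PosSemidef then
    (posSemidefSqrt (h.2.mul_mul_conjTranspose_same (posSemidefSqrt h.1))).trace.re ^ 2
  else 0

/-- `σ` is a convex combination of pure states of Schmidt rank at most `k`
(i.e. `σ ∈ S_k`). -/
def InSchmidtClass {a b : ℕ} (k : ℕ)
    (σ : Matrix (Fin a × Fin b) (Fin a × Fin b) ℂ) : Prop :=
  ∃ (m : ℕ) (q : Fin m → ℝ) (v : Fin m → (Fin a × Fin b → ℂ)),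
    (∀ i, 0 ≤ q i) ∧ (∑ i, q i = 1) ∧
    (∀ i, ∑ p, ‖v i p‖ ^ 2 = 1) ∧
    (∀ i, (coeffMat (v i)).rank ≤ k) ∧
    σ = ∑ i, (q i : ℂ) • outer (v i)

/-- The `k`-Schmidt fidelity `F_k(ρ) = sup_{σ ∈ S_k} F(ρ, σ)`. -/
noncomputable def schmidtFidelity {a b : ℕ} (k : ℕ)
    (ρ : Matrix (Fin a × Fin b) (Fin a × Fin b) ℂ) : ℝ :=
  sSup { x : ℝ | ∃ σ, InSchmidtClass k σ ∧ x = fidelity ρ σ }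

noncomputable section Aux

variable {n m : Type*} [Fintype n] [Fintype m]

/-- squared norm of a complex vector -/
def nsq (x : n → ℂ) : ℝ := ∑ i, ‖x i‖ ^ 2

lemma nsq_nonneg (x : n → ℂ) : 0 ≤ nsq x :=
  Finset.sum_nonneg fun i _ => sq_nonneg _

lemma dot_self_eq (x : n → ℂ) : star x ⬝ᵥ x = ((nsq x : ℝ) : ℂ) := by
  simp only [nsq, dotProduct, Pi.star_apply, Complex.ofReal_sum]
  refine Finset.sum_congr rfl fun i _ => ?_
  rw [Complex.sq_norm, Complex.star_def, ← Complex.normSq_eq_conj_mul_self]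

lemma dot_cauchy (x y : n → ℂ) :
    ‖star x ⬝ᵥ y‖ ≤ Real.sqrt (nsq x) * Real.sqrt (nsq y) := by
  have h1 : ‖star x ⬝ᵥ y‖ ≤ ∑ i, ‖x i‖ * ‖y i‖ := by
    refine (norm_sum_le _ _).trans_eq (Finset.sum_congr rfl fun i _ => ?_)
    simp [_root_.map_mul]
  have h2 : (∑ i, ‖x i‖ * ‖y i‖) ^ 2 ≤ nsq x * nsq y :=
    Finset.sum_mul_sq_le_sq_mul_sq _ _ _
  have h3 : (0:ℝ) ≤ ∑ i, ‖x i‖ * ‖y i‖ :=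
    Finset.sum_nonneg fun i _ => mul_nonneg (norm_nonneg _) (norm_nonneg _)
  calc ‖star x ⬝ᵥ y‖ ≤ ∑ i, ‖x i‖ * ‖y i‖ := h1
    _ = Real.sqrt ((∑ i, ‖x i‖ * ‖y i‖) ^ 2) := by
        rw [Real.sqrt_sq h3]
    _ ≤ Real.sqrt (nsq x * nsq y) := Real.sqrt_le_sqrt h2
    _ = Real.sqrt (nsq x) * Real.sqrt (nsq y) := Real.sqrt_mul (nsq_nonneg x) _

lemma dot_shift (A : Matrix n m ℂ) (x : n → ℂ) (y : m → ℂ) :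
    star x ⬝ᵥ (A *ᵥ y) = star (Aᴴ *ᵥ x) ⬝ᵥ y := by
  rw [star_mulVec, conjTranspose_conjTranspose, ← dotProduct_mulVec]

lemma nsq_mulVec (A : Matrix n m ℂ) (y : m → ℂ) :
    ((star y ⬝ᵥ ((Aᴴ * A) *ᵥ y)) : ℂ) = ((nsq (A *ᵥ y) : ℝ) : ℂ) := by
  rw [← dot_self_eq, ← mulVec_mulVec, dot_shift, conjTranspose_conjTranspose]

/-- quadratic form of a hermitian idempotent is bounded by the norm -/
lemma proj_quad_le {G : Matrix n n ℂ} (hG : Gᴴ = G) (hGG : G * G = G) (x : n → ℂ) :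
    (star x ⬝ᵥ (G *ᵥ x)).re ≤ nsq x := by
  set z := G *ᵥ x with hz
  have key : star x ⬝ᵥ (G *ᵥ x) = ((nsq z : ℝ) : ℂ) := by
    conv_lhs => rw [← hGG, ← mulVec_mulVec]
    rw [dot_shift, hG, ← hz, dot_self_eq]
  have habs : ‖star x ⬝ᵥ z‖ ≤ Real.sqrt (nsq x) * Real.sqrt (nsq z) :=
    dot_cauchy x z
  have hle : nsq z ≤ Real.sqrt (nsq x) * Real.sqrt (nsq z) := by
    calc nsq z = ‖((nsq z : ℝ) : ℂ)‖ := by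
          rw [Complex.norm_of_nonneg (nsq_nonneg z)]
      _ = ‖star x ⬝ᵥ z‖ := by rw [← key]
      _ ≤ _ := habs
  have hzx : nsq z ≤ nsq x := by
    rcases eq_or_lt_of_le (nsq_nonneg z) with h0 | h0
    · rw [← h0]; exact nsq_nonneg x
    · have hs : Real.sqrt (nsq z) ≤ Real.sqrt (nsq x) := by
        have h : Real.sqrt (nsq z) * Real.sqrt (nsq z) ≤
            Real.sqrt (nsq x) * Real.sqrt (nsq z) := by
          rw [Real.mul_self_sqrt (nsq_nonneg z)]; exact hle
        exact le_of_mul_le_mul_right h (Real.sqrt_pos.mpr h0)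
      calc nsq z = Real.sqrt (nsq z) * Real.sqrt (nsq z) :=
            (Real.mul_self_sqrt (nsq_nonneg z)).symm
        _ ≤ Real.sqrt (nsq x) * Real.sqrt (nsq x) :=
            mul_le_mul hs hs (Real.sqrt_nonneg _) (Real.sqrt_nonneg _)
        _ = nsq x := Real.mul_self_sqrt (nsq_nonneg x)
  rw [key]
  simpa using hzx

end Aux
section Sand

variable {n : Type*} [Fintype n] [DecidableEq n]

/-- sandwich of a real diagonal by a unitary -/
noncomputable def sand (V : Matrix n n ℂ) (d : n → ℝ) : Matrix n n ℂ :=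
  V * Matrix.diagonal ((↑) ∘ d) * star V

lemma sand_congr {V : Matrix n n ℂ} {d e : n → ℝ} (h : ∀ i, d i = e i) :
    sand V d = sand V e := by
  have : ((↑) ∘ d : n → ℂ) = (↑) ∘ e := funext fun i => by simp [h i]
  unfold sand; rw [this]

lemma diagonal_ofReal_eq {d : n → ℂ} {e : n → ℝ} (h : ∀ i, d i = (e i : ℂ)) :
    Matrix.diagonal d = Matrix.diagonal ((↑) ∘ e : n → ℂ) := by
  have : d = ((↑) ∘ e : n → ℂ) := funext fun i => by simp [h i]
  rw [this]

lemma sand_mul {V : Matrix n n ℂ} (hV : V ∈ Matrix.unitaryGroup n ℂ) (d e : n → ℝ) :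
    sand V d * sand V e = sand V (fun i => d i * e i) := by
  have h1 : star V * V = 1 := Matrix.UnitaryGroup.star_mul_self ⟨V, hV⟩
  unfold sand
  calc V * Matrix.diagonal ((↑) ∘ d) * star V * (V * Matrix.diagonal ((↑) ∘ e) * star V)
      = V * (Matrix.diagonal ((↑) ∘ d) * (star V * V) * Matrix.diagonal ((↑) ∘ e)) * star V := by
        noncomm_ring
    _ = V * Matrix.diagonal ((↑) ∘ fun i => d i * e i) * star V := by
        rw [h1, mul_one, Matrix.diagonal_mul_diagonal,
          diagonal_ofReal_eq (e := fun i => d i * e i) (fun i => by simp)]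

lemma diag_star (d : n → ℝ) :
    star (Matrix.diagonal ((↑) ∘ d : n → ℂ)) = Matrix.diagonal ((↑) ∘ d) := by
  rw [Matrix.star_eq_conjTranspose, Matrix.diagonal_conjTranspose]
  have : star ((↑) ∘ d : n → ℂ) = ((↑) ∘ d : n → ℂ) :=
    funext fun i => by simp [Complex.conj_ofReal]
  rw [this]

lemma sand_conjTranspose (V : Matrix n n ℂ) (d : n → ℝ) : (sand V d)ᴴ = sand V d := by
  unfold sand
  rw [← Matrix.star_eq_conjTranspose, Matrix.star_mul, Matrix.star_mul, star_star, diag_star,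
    mul_assoc]

lemma sand_posSemidef (V : Matrix n n ℂ) (d : n → ℝ) (hd : ∀ i, 0 ≤ d i) :
    (sand V d).PosSemidef := by
  have h : (Matrix.diagonal ((↑) ∘ d : n → ℂ)).PosSemidef := by
    refine Matrix.posSemidef_diagonal_iff.mpr fun i => ?_
    rw [Function.comp_apply, Complex.le_def]
    simp [hd i]
  simpa [sand, Matrix.star_eq_conjTranspose] using h.mul_mul_conjTranspose_same V

lemma sand_trace {V : Matrix n n ℂ} (hV : V ∈ Matrix.unitaryGroup n ℂ) (d : n → ℝ) :
    (sand V d).trace = ((∑ i, d i : ℝ) : ℂ) := by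
  have h1 : star V * V = 1 := Matrix.UnitaryGroup.star_mul_self ⟨V, hV⟩
  unfold sand
  rw [Matrix.trace_mul_cycle, h1, one_mul, Matrix.trace_diagonal]
  simp

lemma sand_one {V : Matrix n n ℂ} (hV : V ∈ Matrix.unitaryGroup n ℂ) :
    sand V (fun _ => 1) = 1 := by
  have h2 : V * star V = 1 := Matrix.mem_unitaryGroup_iff.mp hV
  unfold sand
  have : Matrix.diagonal ((↑) ∘ (fun _ : n => (1:ℝ)) : n → ℂ) = 1 := by
    rw [show ((↑) ∘ (fun _ : n => (1:ℝ)) : n → ℂ) = fun _ => (1:ℂ) from funext fun i => by simp]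
    exact Matrix.diagonal_one
  rw [this, mul_one, h2]

lemma sand_sub {V : Matrix n n ℂ} (d e : n → ℝ) :
    sand V d - sand V e = sand V (fun i => d i - e i) := by
  unfold sand
  rw [← Matrix.sub_mul, ← Matrix.mul_sub]
  congr 2
  rw [Matrix.diagonal_sub, diagonal_ofReal_eq (e := fun i => d i - e i) (fun i => by simp)]

lemma sand_zero (V : Matrix n n ℂ) : sand V (fun _ => 0) = 0 := by
  unfold sand
  have : Matrix.diagonal ((↑) ∘ (fun _ : n => (0:ℝ)) : n → ℂ) = 0 := by
    rw [show ((↑) ∘ (fun _ : n => (0:ℝ)) : n → ℂ) = fun _ => (0:ℂ) from funext fun i => by simp]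
    exact Matrix.diagonal_zero
  rw [this, mul_zero, zero_mul]

lemma traceDiagMul (d : n → ℂ) (B : Matrix n n ℂ) :
    (Matrix.diagonal d * B).trace = ∑ i, d i * B i i := by
  simp [Matrix.trace, Matrix.diag, Matrix.mul_apply, Matrix.diagonal_apply]

lemma sand_mul_trace_eq {V : Matrix n n ℂ} (hV : V ∈ Matrix.unitaryGroup n ℂ)
    (d : n → ℝ) (D : Matrix n n ℂ) :
    (sand V d * D).trace = ∑ i, (d i : ℂ) * ((star V * D * V) i i) := by
  unfold sand
  rw [Matrix.trace_mul_cycle, Matrix.trace_mul_cycle, ← Matrix.mul_assoc,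
    Matrix.trace_mul_comm, traceDiagMul]
  rfl

end Sand
section Pinv

variable {n : Type*} [Fintype n] [DecidableEq n]

/-- square root from spectral data -/
noncomputable def sqrtOf (W : Matrix n n ℂ) (l : n → ℝ) : Matrix n n ℂ :=
  sand W (fun i => Real.sqrt (l i))

/-- pseudo-inverse of the square root, from spectral data -/
noncomputable def pinvSqrtOf (W : Matrix n n ℂ) (l : n → ℝ) : Matrix n n ℂ :=
  sand W (fun i => if l i = 0 then 0 else (Real.sqrt (l i))⁻¹)

/-- support projection from spectral data -/
noncomputable def projOf (W : Matrix n n ℂ) (l : n → ℝ) : Matrix n n ℂ :=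
  sand W (fun i => if l i = 0 then 0 else 1)

variable {W : Matrix n n ℂ} {l : n → ℝ}
  (hW : W ∈ Matrix.unitaryGroup n ℂ) (hl : ∀ i, 0 ≤ l i)

include hW hl in
lemma sqrtOf_mul_pinvSqrtOf : sqrtOf W l * pinvSqrtOf W l = projOf W l := by
  rw [sqrtOf, pinvSqrtOf, sand_mul hW, projOf]
  refine sand_congr fun i => ?_
  by_cases h : l i = 0
  · simp [h]
  · have hpos : 0 < l i := lt_of_le_of_ne (hl i) (Ne.symm h)
    rw [if_neg h, if_neg h, mul_inv_cancel₀ (ne_of_gt (Real.sqrt_pos.mpr hpos))]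

include hW hl in
lemma pinvSqrtOf_mul_sqrtOf : pinvSqrtOf W l * sqrtOf W l = projOf W l := by
  rw [sqrtOf, pinvSqrtOf, sand_mul hW, projOf]
  refine sand_congr fun i => ?_
  by_cases h : l i = 0
  · simp [h]
  · have hpos : 0 < l i := lt_of_le_of_ne (hl i) (Ne.symm h)
    rw [if_neg h, if_neg h, inv_mul_cancel₀ (ne_of_gt (Real.sqrt_pos.mpr hpos))]

lemma pinvSqrtOf_conjTranspose : (pinvSqrtOf W l)ᴴ = pinvSqrtOf W l := sand_conjTranspose _ _

lemma projOf_conjTranspose : (projOf W l)ᴴ = projOf W l := sand_conjTranspose _ _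

include hW in
lemma projOf_idem : projOf W l * projOf W l = projOf W l := by
  rw [projOf, sand_mul hW]
  refine sand_congr fun i => ?_
  by_cases h : l i = 0 <;> simp [h]

include hW in
lemma projOf_mul_pinvSqrtOf : projOf W l * pinvSqrtOf W l = pinvSqrtOf W l := by
  rw [projOf, pinvSqrtOf, sand_mul hW]
  refine sand_congr fun i => ?_
  by_cases h : l i = 0 <;> simp [h]

variable {X : Matrix n n ℂ} (hX : X = sand W l)

include hW hl hX in
lemma pinvSqrtOf_mul_mid_mul : pinvSqrtOf W l * X * pinvSqrtOf W l = projOf W l := by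
  rw [hX, pinvSqrtOf, sand_mul hW, sand_mul hW, projOf]
  refine sand_congr fun i => ?_
  by_cases h : l i = 0
  · simp [h]
  · have hpos : 0 < l i := lt_of_le_of_ne (hl i) (Ne.symm h)
    rw [if_neg h, if_neg h]
    have hs : Real.sqrt (l i) ≠ 0 := ne_of_gt (Real.sqrt_pos.mpr hpos)
    calc _ = l i / (Real.sqrt (l i) * Real.sqrt (l i)) := by ring
      _ = 1 := by rw [Real.mul_self_sqrt (hl i), div_self h]

include hW hX in
lemma projOf_mul_eq_self {m : Type*} [Fintype m] (M : Matrix n m ℂ) (hM : M * Mᴴ = X) :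
    projOf W l * M = M := by
  set P := projOf W l with hP
  have h1m : (1 : Matrix n n ℂ) - P =
      sand W (fun i => 1 - if l i = 0 then 0 else 1) := by
    rw [← sand_one hW, hP, projOf, sand_sub]
  have hzero : ((1 : Matrix n n ℂ) - P) * X * ((1 : Matrix n n ℂ) - P) = 0 := by
    rw [h1m, hX, sand_mul hW, sand_mul hW]
    rw [show (0 : Matrix n n ℂ) = sand W (fun _ => 0) from (sand_zero _).symm]
    refine sand_congr fun i => ?_
    by_cases h : l i = 0 <;> simp [h]
  have h2 : (((1 : Matrix n n ℂ) - P) * M) * (((1 : Matrix n n ℂ) - P) * M)ᴴ = 0 := by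
    rw [Matrix.conjTranspose_mul, Matrix.conjTranspose_sub, Matrix.conjTranspose_one, hP,
      projOf_conjTranspose, ← hP]
    rw [← Matrix.mul_assoc, Matrix.mul_assoc ((1 : Matrix n n ℂ) - P) M Mᴴ, hM, hzero]
  have h3 : ((1 : Matrix n n ℂ) - P) * M = 0 :=
    Matrix.self_mul_conjTranspose_eq_zero.mp h2
  rw [Matrix.sub_mul, Matrix.one_mul] at h3
  exact (sub_eq_zero.mp h3).symm

end Pinv

section PsdData

variable {n : Type*} [Fintype n] [DecidableEq n] {ρ : Matrix n n ℂ} (hρ : ρ.PosSemidef)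

/-- spectral unitary of a PSD matrix -/
noncomputable def specU : Matrix n n ℂ := hρ.1.eigenvectorUnitary

lemma specU_mem : specU hρ ∈ Matrix.unitaryGroup n ℂ := (hρ.1.eigenvectorUnitary).property

/-- eigenvalues -/
noncomputable def specL : n → ℝ := hρ.1.eigenvalues

lemma specL_nonneg (i : n) : 0 ≤ specL hρ i := hρ.eigenvalues_nonneg i

lemma psd_eq_sand : ρ = sand (specU hρ) (specL hρ) := by
  have h := hρ.1.spectral_theorem
  unfold sand specU specL
  rw [Matrix.star_eq_conjTranspose]
  exact h

lemma psd_sqrt_eq : posSemidefSqrt hρ = sqrtOf (specU hρ) (specL hρ) := rfl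

lemma psdSqrt_psd : (posSemidefSqrt hρ).PosSemidef := by
  rw [psd_sqrt_eq]; exact sand_posSemidef _ _ (fun i => Real.sqrt_nonneg _)

lemma psdSqrt_mul_self : posSemidefSqrt hρ * posSemidefSqrt hρ = ρ := by
  rw [psd_sqrt_eq, sqrtOf, sand_mul (specU_mem hρ)]
  exact (sand_congr fun i => Real.mul_self_sqrt (specL_nonneg hρ i)).trans (psd_eq_sand hρ).symm

open scoped MatrixOrder in
lemma posSemidefSqrt_eq_cfc : posSemidefSqrt hρ = CFC.sqrt ρ := by
  rw [CFC.sqrt_eq_cfc, cfc_nnreal_eq_real _ ρ, hρ.1.cfc_eq]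
  unfold IsHermitian.cfc posSemidefSqrt
  rw [Unitary.conjStarAlgAut_apply]
  congr 3
  funext i
  simp [hρ.eigenvalues_nonneg i]

end PsdData
section TraceHelpers

variable {n m : Type*} [Fintype n] [DecidableEq n] [Fintype m]

lemma entry_conj_sandwich (A D : Matrix n n ℂ) (i : n) :
    (Aᴴ * D * A) i i = star (fun x => A x i) ⬝ᵥ (D *ᵥ (fun x => A x i)) := by
  simp only [Matrix.mul_apply, Matrix.conjTranspose_apply, dotProduct, Matrix.mulVec,
    Pi.star_apply, Finset.sum_mul, Finset.mul_sum]
  rw [Finset.sum_comm]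
  refine Finset.sum_congr rfl fun x _ => Finset.sum_congr rfl fun y _ => ?_
  ring

lemma entry_col_dot (A : Matrix n n ℂ) (i : n) :
    star (fun x => A x i) ⬝ᵥ (fun x => A x i) = (Aᴴ * A) i i := by
  simp [dotProduct, Matrix.mul_apply, Matrix.conjTranspose_apply]

end TraceHelpers

section Uhlmann

variable {n m : Type*} [Fintype n] [DecidableEq n] [Fintype m]

lemma uhlmann_trace_le {ρ σ : Matrix n n ℂ} (hρ : ρ.PosSemidef) (hσ : σ.PosSemidef)
    {M N : Matrix n m ℂ} (hM : M * Mᴴ = ρ) (hN : N * Nᴴ = σ)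
    (hQ : (posSemidefSqrt hρ * σ * (posSemidefSqrt hρ)ᴴ).PosSemidef) :
    ((Mᴴ * N).trace).re ≤ ((posSemidefSqrt hQ).trace).re := by
  have hAh : (posSemidefSqrt hρ)ᴴ = posSemidefSqrt hρ := (psdSqrt_psd hρ).1
  have hBh : (posSemidefSqrt hσ)ᴴ = posSemidefSqrt hσ := (psdSqrt_psd hσ).1
  set A := posSemidefSqrt hρ with hA
  set B := posSemidefSqrt hσ with hB
  set Q := A * σ * Aᴴ with hQdef
  set T := A * B with hT
  have hTT : T * Tᴴ = Q := by
    rw [hT, Matrix.conjTranspose_mul, hBh, hQdef]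
    calc A * B * (B * Aᴴ) = A * (B * B) * Aᴴ := by noncomm_ring
      _ = A * σ * Aᴴ := by rw [hB, psdSqrt_mul_self hσ]
  -- spectral data
  set Wρ := specU hρ with hWρdef
  set lρ := specL hρ with hlρdef
  set Wσ := specU hσ with hWσdef
  set lσ := specL hσ with hlσdef
  set WQ := specU hQ with hWQdef
  set lQ := specL hQ with hlQdef
  have hWρm := specU_mem hρ
  have hWσm := specU_mem hσ
  have hWQm := specU_mem hQ
  have hlρn := specL_nonneg hρ
  have hlσn := specL_nonneg hσ
  have hlQn := specL_nonneg hQ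
  have hρs : ρ = sand Wρ lρ := psd_eq_sand hρ
  have hσs : σ = sand Wσ lσ := psd_eq_sand hσ
  have hQs : Q = sand WQ lQ := psd_eq_sand hQ
  have hAeq : A = sqrtOf Wρ lρ := psd_sqrt_eq hρ
  have hBeq : B = sqrtOf Wσ lσ := psd_sqrt_eq hσ
  have hSeq : posSemidefSqrt hQ = sqrtOf WQ lQ := psd_sqrt_eq hQ
  set S := posSemidefSqrt hQ with hS
  -- partial isometries
  set U := pinvSqrtOf Wρ lρ * M with hU
  set Vn := pinvSqrtOf Wσ lσ * N with hVn
  set K := pinvSqrtOf WQ lQ * T with hK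
  have hAU : A * U = M := by
    rw [hU, ← Matrix.mul_assoc, hAeq, sqrtOf_mul_pinvSqrtOf hWρm hlρn]
    exact projOf_mul_eq_self hWρm hρs M hM
  have hBV : B * Vn = N := by
    rw [hVn, ← Matrix.mul_assoc, hBeq, sqrtOf_mul_pinvSqrtOf hWσm hlσn]
    exact projOf_mul_eq_self hWσm hσs N hN
  have hSK : S * K = T := by
    rw [hK, ← Matrix.mul_assoc, hSeq, sqrtOf_mul_pinvSqrtOf hWQm hlQn]
    exact projOf_mul_eq_self hWQm hQs T hTT
  have hUU : U * Uᴴ = projOf Wρ lρ := by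
    rw [hU, Matrix.conjTranspose_mul, pinvSqrtOf_conjTranspose]
    calc pinvSqrtOf Wρ lρ * M * (Mᴴ * pinvSqrtOf Wρ lρ)
        = pinvSqrtOf Wρ lρ * (M * Mᴴ) * pinvSqrtOf Wρ lρ := by
          rw [← Matrix.mul_assoc, Matrix.mul_assoc (pinvSqrtOf Wρ lρ) M Mᴴ]
      _ = projOf Wρ lρ := by rw [hM]; exact pinvSqrtOf_mul_mid_mul hWρm hlρn hρs
  have hKK : K * Kᴴ = projOf WQ lQ := by
    rw [hK, Matrix.conjTranspose_mul, pinvSqrtOf_conjTranspose]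
    calc pinvSqrtOf WQ lQ * T * (Tᴴ * pinvSqrtOf WQ lQ)
        = pinvSqrtOf WQ lQ * (T * Tᴴ) * pinvSqrtOf WQ lQ := by
          rw [← Matrix.mul_assoc, Matrix.mul_assoc (pinvSqrtOf WQ lQ) T Tᴴ]
      _ = projOf WQ lQ := by rw [hTT]; exact pinvSqrtOf_mul_mid_mul hWQm hlQn hQs
  have hVV : Vn * Vnᴴ = projOf Wσ lσ := by
    rw [hVn, Matrix.conjTranspose_mul, pinvSqrtOf_conjTranspose]
    calc pinvSqrtOf Wσ lσ * N * (Nᴴ * pinvSqrtOf Wσ lσ)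
        = pinvSqrtOf Wσ lσ * (N * Nᴴ) * pinvSqrtOf Wσ lσ := by
          rw [← Matrix.mul_assoc, Matrix.mul_assoc (pinvSqrtOf Wσ lσ) N Nᴴ]
      _ = projOf Wσ lσ := by rw [hN]; exact pinvSqrtOf_mul_mid_mul hWσm hlσn hσs
  -- Gram projection for Vn
  set G := Vnᴴ * Vn with hG
  have hGherm : Gᴴ = G := by
    rw [hG, Matrix.conjTranspose_mul, Matrix.conjTranspose_conjTranspose]
  have hPVn : projOf Wσ lσ * Vn = Vn := by
    rw [hVn, ← Matrix.mul_assoc, projOf_mul_pinvSqrtOf hWσm]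
  have hGG : G * G = G := by
    rw [hG]
    calc Vnᴴ * Vn * (Vnᴴ * Vn) = Vnᴴ * ((Vn * Vnᴴ) * Vn) := by
          rw [Matrix.mul_assoc Vnᴴ Vn (Vnᴴ * Vn), ← Matrix.mul_assoc Vn Vnᴴ Vn]
      _ = Vnᴴ * Vn := by rw [hVV, hPVn]
  -- trace rearrangement
  set D := K * (Vn * Uᴴ) with hD
  have htr : (Mᴴ * N).trace = (S * D).trace := by
    have h1 : Mᴴ * N = Uᴴ * (S * K) * Vn := by
      rw [hSK, ← hAU, ← hBV, Matrix.conjTranspose_mul, hAh, hT]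
      calc Uᴴ * A * (B * Vn) = Uᴴ * (A * B) * Vn := by
            rw [Matrix.mul_assoc, Matrix.mul_assoc, Matrix.mul_assoc]
        _ = _ := rfl
    rw [h1]
    calc (Uᴴ * (S * K) * Vn).trace = ((S * K) * Vn * Uᴴ).trace := by
          rw [Matrix.mul_assoc, Matrix.trace_mul_comm]
      _ = (S * D).trace := by rw [hD, Matrix.mul_assoc, Matrix.mul_assoc]
  rw [htr]
  -- expand S
  set ν : n → ℝ := fun i => Real.sqrt (lQ i) with hν
  have hνn : ∀ i, 0 ≤ ν i := fun i => Real.sqrt_nonneg _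
  have hSsand : S = sand WQ ν := by rw [hSeq]; rfl
  set E := WQᴴ * D * WQ with hE
  have htr2 : (S * D).trace = ∑ i, (ν i : ℂ) * E i i := by
    rw [hSsand, sand_mul_trace_eq hWQm]
    refine Finset.sum_congr rfl fun i _ => ?_
    rw [hE, Matrix.star_eq_conjTranspose]
  -- entrywise bound
  have hbound : ∀ i, (E i i).re ≤ 1 := by
    intro i
    set w : n → ℂ := fun x => WQ x i with hw
    have hwdot : star w ⬝ᵥ w = 1 := by
      rw [hw, entry_col_dot]
      have h1 : WQᴴ * WQ = 1 := by
        rw [← Matrix.star_eq_conjTranspose]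
        exact Matrix.UnitaryGroup.star_mul_self ⟨WQ, hWQm⟩
      rw [h1, Matrix.one_apply_eq]
    have hnw : nsq w = 1 := by
      have h1 := hwdot
      rw [dot_self_eq] at h1
      exact_mod_cast h1
    have hEw : E i i = star w ⬝ᵥ (D *ᵥ w) := by
      rw [hE, entry_conj_sandwich]
    have hDw : D *ᵥ w = K *ᵥ (Vn *ᵥ (Uᴴ *ᵥ w)) := by
      conv_rhs => rw [Matrix.mulVec_mulVec, Matrix.mulVec_mulVec]
      rw [hD, ← Matrix.mul_assoc K Vn Uᴴ]
    have hnK : nsq (Kᴴ *ᵥ w) ≤ 1 := by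
      have h1 : ((star w ⬝ᵥ ((Kᴴᴴ * Kᴴ) *ᵥ w)) : ℂ) = ((nsq (Kᴴ *ᵥ w) : ℝ) : ℂ) :=
        nsq_mulVec Kᴴ w
      rw [Matrix.conjTranspose_conjTranspose, hKK] at h1
      have h2 : (star w ⬝ᵥ (projOf WQ lQ *ᵥ w)).re = nsq (Kᴴ *ᵥ w) := by
        rw [h1]; exact Complex.ofReal_re _
      have h3 := proj_quad_le (projOf_conjTranspose (W := WQ) (l := lQ))
        (projOf_idem hWQm) w
      rw [h2, hnw] at h3
      exact h3
    have hnU : nsq (Uᴴ *ᵥ w) ≤ 1 := by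
      have h1 : ((star w ⬝ᵥ ((Uᴴᴴ * Uᴴ) *ᵥ w)) : ℂ) = ((nsq (Uᴴ *ᵥ w) : ℝ) : ℂ) :=
        nsq_mulVec Uᴴ w
      rw [Matrix.conjTranspose_conjTranspose, hUU] at h1
      have h2 : (star w ⬝ᵥ (projOf Wρ lρ *ᵥ w)).re = nsq (Uᴴ *ᵥ w) := by
        rw [h1]; exact Complex.ofReal_re _
      have h3 := proj_quad_le (projOf_conjTranspose (W := Wρ) (l := lρ))
        (projOf_idem hWρm) w
      rw [h2, hnw] at h3
      exact h3
    have hnV : nsq (Vn *ᵥ (Uᴴ *ᵥ w)) ≤ 1 := by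
      have h1 : ((star (Uᴴ *ᵥ w) ⬝ᵥ ((Vnᴴ * Vn) *ᵥ (Uᴴ *ᵥ w))) : ℂ)
          = ((nsq (Vn *ᵥ (Uᴴ *ᵥ w)) : ℝ) : ℂ) := nsq_mulVec Vn (Uᴴ *ᵥ w)
      have h2 : (star (Uᴴ *ᵥ w) ⬝ᵥ (G *ᵥ (Uᴴ *ᵥ w))).re = nsq (Vn *ᵥ (Uᴴ *ᵥ w)) := by
        rw [hG, h1]; exact Complex.ofReal_re _
      have h3 := proj_quad_le hGherm hGG (Uᴴ *ᵥ w)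
      rw [h2] at h3
      exact h3.trans hnU
    have habs : ‖E i i‖ ≤ 1 := by
      rw [hEw, hDw, dot_shift]
      calc ‖star (Kᴴ *ᵥ w) ⬝ᵥ (Vn *ᵥ (Uᴴ *ᵥ w))‖
          ≤ Real.sqrt (nsq (Kᴴ *ᵥ w)) * Real.sqrt (nsq (Vn *ᵥ (Uᴴ *ᵥ w))) :=
            dot_cauchy _ _
        _ ≤ 1 * 1 := by
            refine mul_le_mul ?_ ?_ (Real.sqrt_nonneg _) zero_le_one
            · exact Real.sqrt_le_one.mpr hnK
            · exact Real.sqrt_le_one.mpr hnV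
        _ = 1 := mul_one 1
    exact (Complex.re_le_norm _).trans habs
  have hStr : (S.trace).re = ∑ i, ν i := by
    rw [hSsand, sand_trace hWQm]
    exact Complex.ofReal_re _
  rw [htr2, hStr, Complex.re_sum]
  calc ∑ i, ((ν i : ℂ) * E i i).re = ∑ i, ν i * (E i i).re := by
        refine Finset.sum_congr rfl fun i _ => ?_
        rw [Complex.re_ofReal_mul]
    _ ≤ ∑ i, ν i * 1 := by
        refine Finset.sum_le_sum fun i _ => ?_
        exact mul_le_mul_of_nonneg_left (hbound i) (hνn i)
    _ = ∑ i, ν i := by simp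

end Uhlmann

section Outer

variable {n : Type*} [Fintype n]

lemma star_dot_comm (x v : n → ℂ) : star x ⬝ᵥ v = (starRingEnd ℂ) (star v ⬝ᵥ x) := by
  simp only [dotProduct, map_sum, Pi.star_apply, Complex.star_def]
  refine Finset.sum_congr rfl fun j _ => ?_
  rw [_root_.map_mul, Complex.conj_conj]
  ring

lemma outer_conjTranspose (v : n → ℂ) : (outer v)ᴴ = outer v := by
  ext i j
  simp only [outer, Matrix.conjTranspose_apply, Matrix.vecMulVec_apply, Pi.star_apply,
    Complex.star_def]
  rw [_root_.map_mul, Complex.conj_conj]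
  ring

lemma outer_mulVec (v x : n → ℂ) : outer v *ᵥ x = (star v ⬝ᵥ x) • v := by
  ext i
  simp only [outer, Matrix.mulVec, dotProduct, Matrix.vecMulVec_apply, Pi.star_apply,
    Pi.smul_apply, smul_eq_mul, Finset.sum_mul]
  refine Finset.sum_congr rfl fun j _ => ?_
  ring

lemma quad_outer (v x : n → ℂ) :
    star x ⬝ᵥ (outer v *ᵥ x) = ((‖star x ⬝ᵥ v‖ ^ 2 : ℝ) : ℂ) := by
  rw [outer_mulVec, dotProduct_smul, smul_eq_mul, star_dot_comm x v]
  rw [Complex.mul_conj, Complex.norm_conj, Complex.sq_norm]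

lemma outer_posSemidef (v : n → ℂ) : (outer v).PosSemidef := by
  refine Matrix.PosSemidef.of_dotProduct_mulVec_nonneg (outer_conjTranspose v) fun x => ?_
  rw [quad_outer]
  exact_mod_cast Complex.zero_le_real.mpr (sq_nonneg _)

lemma outer_trace (v : n → ℂ) : (outer v).trace = ((nsq v : ℝ) : ℂ) := by
  simp only [Matrix.trace, Matrix.diag, outer, Matrix.vecMulVec_apply, Pi.star_apply,
    Complex.star_def, nsq, Complex.ofReal_sum]
  refine Finset.sum_congr rfl fun i _ => ?_
  rw [Complex.mul_conj, Complex.sq_norm]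

lemma outer_mul_outer (v : n → ℂ) :
    outer v * outer v = (star v ⬝ᵥ v) • outer v := by
  ext i j
  simp only [Matrix.mul_apply, outer, Matrix.vecMulVec_apply, Pi.star_apply,
    Matrix.smul_apply, smul_eq_mul, dotProduct, Finset.sum_mul]
  refine Finset.sum_congr rfl fun k _ => ?_
  ring

lemma outer_sandwich (ψ : n → ℂ) (σ : Matrix n n ℂ) :
    outer ψ * σ * outer ψ = (star ψ ⬝ᵥ (σ *ᵥ ψ)) • outer ψ := by
  ext i j
  simp only [Matrix.mul_apply, outer, Matrix.vecMulVec_apply, Pi.star_apply,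
    Matrix.smul_apply, smul_eq_mul, dotProduct, Matrix.mulVec, Finset.sum_mul,
    Finset.mul_sum]
  rw [Finset.sum_comm]
  refine Finset.sum_congr rfl fun k _ => ?_
  refine Finset.sum_congr rfl fun l _ => ?_
  ring

lemma outer_smul_unit (u : ℂ) (hu : ‖u‖ = 1) (v : n → ℂ) :
    outer (u • v) = outer v := by
  ext i j
  simp only [outer, Matrix.vecMulVec_apply, Pi.star_apply, Pi.smul_apply, smul_eq_mul,
    Complex.star_def]
  rw [_root_.map_mul]
  have h1 : u * (starRingEnd ℂ) u = 1 := by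
    rw [Complex.mul_conj, ← Complex.sq_norm, hu]
    norm_num
  calc u * v i * ((starRingEnd ℂ) u * (starRingEnd ℂ) (v j))
      = (u * (starRingEnd ℂ) u) * (v i * (starRingEnd ℂ) (v j)) := by ring
    _ = v i * (starRingEnd ℂ) (v j) := by rw [h1, one_mul]

end Outer
section Fid

variable {n : Type*} [Fintype n] [DecidableEq n]

lemma dot_sum {γ : Type*} [Fintype γ] (v : n → ℂ) (g : γ → n → ℂ) :
    v ⬝ᵥ (∑ c, g c) = ∑ c, v ⬝ᵥ g c := by
  simp only [dotProduct, Finset.sum_apply, Finset.mul_sum]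
  exact Finset.sum_comm

lemma sum_mulVec {γ : Type*} [Fintype γ] (f : γ → Matrix n n ℂ) (x : n → ℂ) :
    (∑ c, f c) *ᵥ x = ∑ c, f c *ᵥ x := by
  ext i
  simp only [Matrix.mulVec, dotProduct, Matrix.sum_apply, Finset.sum_apply, Finset.sum_mul]
  exact Finset.sum_comm

lemma fidelity_nonneg (ρ σ : Matrix n n ℂ) : 0 ≤ fidelity ρ σ := by
  unfold fidelity
  split
  · exact sq_nonneg _
  · exact le_refl 0

lemma fidelity_of_psd {ρ σ : Matrix n n ℂ} (hρ : ρ.PosSemidef) (hσ : σ.PosSemidef) :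
    fidelity ρ σ = (posSemidefSqrt (hσ.mul_mul_conjTranspose_same (posSemidefSqrt hρ))).trace.re ^ 2 :=
  dif_pos ⟨hρ, hσ⟩

open scoped MatrixOrder in
lemma sqrt_eq_of {X A : Matrix n n ℂ} (hX : X.PosSemidef) (hA : A.PosSemidef)
    (h : A ^ 2 = X) : posSemidefSqrt hX = A := by
  rw [posSemidefSqrt_eq_cfc]
  exact CFC.sqrt_unique (by rw [← sq]; exact h) hA.nonneg

lemma fidelity_ge_sq {ρ σ : Matrix n n ℂ} (hρ : ρ.PosSemidef) (hσ : σ.PosSemidef)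
    {m : Type*} [Fintype m] {M N : Matrix n m ℂ} (hM : M * Mᴴ = ρ) (hN : N * Nᴴ = σ)
    (c : ℝ) (hc0 : 0 ≤ c) (hc : c ≤ ((Mᴴ * N).trace).re) : c ^ 2 ≤ fidelity ρ σ := by
  rw [fidelity_of_psd hρ hσ]
  have h := uhlmann_trace_le hρ hσ hM hN (hσ.mul_mul_conjTranspose_same (posSemidefSqrt hρ))
  exact pow_le_pow_left₀ hc0 (hc.trans h) 2

lemma psd_real_smul {M : Matrix n n ℂ} (hM : M.PosSemidef) {r : ℝ} (hr : 0 ≤ r) :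
    (((r : ℂ)) • M).PosSemidef := by
  refine Matrix.PosSemidef.of_dotProduct_mulVec_nonneg ?_ ?_
  · show _ᴴ = _
    rw [Matrix.conjTranspose_smul]
    have : star ((r : ℝ) : ℂ) = ((r : ℝ) : ℂ) := by
      rw [Complex.star_def, Complex.conj_ofReal]
    rw [this, hM.1]
  · intro x
    rw [Matrix.smul_mulVec, dotProduct_smul, smul_eq_mul]
    have h1 := hM.dotProduct_mulVec_nonneg x
    have h2 : (0 : ℂ) ≤ (r : ℂ) := by
      rw [Complex.le_def]
      simp [hr]
    calc (0 : ℂ) = (r : ℂ) * 0 := by ring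
      _ ≤ (r : ℂ) * (star x ⬝ᵥ M *ᵥ x) := by
          exact mul_le_mul_of_nonneg_left h1 h2
  
lemma psd_sum {γ : Type*} [Fintype γ] (f : γ → Matrix n n ℂ)
    (hf : ∀ c, (f c).PosSemidef) : (∑ c, f c).PosSemidef := by
  refine Matrix.PosSemidef.of_dotProduct_mulVec_nonneg ?_ ?_
  · show _ᴴ = _
    rw [Matrix.conjTranspose_sum]
    exact Finset.sum_congr rfl fun c _ => (hf c).1
  · intro x
    rw [_root_.sum_mulVec, dot_sum]
    exact Finset.sum_nonneg fun c _ => (hf c).dotProduct_mulVec_nonneg x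

lemma quad_sum_outer {γ : Type*} [Fintype γ] (q : γ → ℝ) (v : γ → n → ℂ) (ψ : n → ℂ) :
    star ψ ⬝ᵥ ((∑ c, (q c : ℂ) • outer (v c)) *ᵥ ψ)
      = ((∑ c, q c * ‖star ψ ⬝ᵥ v c‖ ^ 2 : ℝ) : ℂ) := by
  rw [_root_.sum_mulVec, dot_sum, Complex.ofReal_sum]
  refine Finset.sum_congr rfl fun c _ => ?_
  rw [Matrix.smul_mulVec, dotProduct_smul, smul_eq_mul, quad_outer,
    Complex.ofReal_mul]

lemma complex_nonneg_re {z : ℂ} (h : 0 ≤ z) : z = ((z.re : ℝ) : ℂ) := by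
  rw [Complex.le_def] at h
  exact (Complex.ext rfl (by simpa using h.2.symm))

lemma fidelity_pure {ψ : n → ℂ} (hψ : nsq ψ = 1) {σ : Matrix n n ℂ} (hσ : σ.PosSemidef) :
    fidelity (outer ψ) σ = (star ψ ⬝ᵥ (σ *ᵥ ψ)).re := by
  have hop : (outer ψ).PosSemidef := outer_posSemidef ψ
  rw [fidelity_of_psd hop hσ]
  set c : ℂ := star ψ ⬝ᵥ (σ *ᵥ ψ) with hc
  have hc0 : 0 ≤ c := hσ.dotProduct_mulVec_nonneg ψ
  have hcre : 0 ≤ c.re := by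
    rw [Complex.le_def] at hc0
    simpa using hc0.1
  have hcr : c = ((c.re : ℝ) : ℂ) := complex_nonneg_re hc0
  have hulen : star ψ ⬝ᵥ ψ = 1 := by rw [dot_self_eq, hψ]; simp
  have hsq : posSemidefSqrt hop = outer ψ :=
    sqrt_eq_of hop hop (by rw [pow_two, outer_mul_outer, hulen, one_smul])
  have hQeq : ((Real.sqrt c.re : ℂ) • outer ψ) ^ 2 = posSemidefSqrt hop * σ * (posSemidefSqrt hop)ᴴ := by
    rw [hsq, outer_conjTranspose, outer_sandwich, ← hc]
    rw [pow_two, Matrix.smul_mul, Matrix.mul_smul, smul_smul, outer_mul_outer, hulen,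
      one_smul, ← Complex.ofReal_mul, Real.mul_self_sqrt hcre]
    rw [← hcr]
  have hA : ((Real.sqrt c.re : ℂ) • outer ψ).PosSemidef :=
    psd_real_smul hop (Real.sqrt_nonneg _)
  have h2 : posSemidefSqrt (hσ.mul_mul_conjTranspose_same (posSemidefSqrt hop))
      = (Real.sqrt c.re : ℂ) • outer ψ :=
    sqrt_eq_of _ hA hQeq
  rw [h2, Matrix.trace_smul, outer_trace, hψ]
  simp only [Complex.ofReal_one, smul_eq_mul, mul_one, Complex.ofReal_re]
  exact Real.sq_sqrt hcre

lemma psd_pair_trace {ρ σ : Matrix n n ℂ} (hρ : ρ.PosSemidef) (hσ : σ.PosSemidef) :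
    ((ρ * σ).trace).re ≤ (ρ.trace).re * (σ.trace).re := by
  have hW := specU_mem hρ
  have hl := specL_nonneg hρ
  have hrep : ρ = sand (specU hρ) (specL hρ) := psd_eq_sand hρ
  set W := specU hρ
  set l := specL hρ
  have htr : ((ρ * σ).trace).re = ∑ i, l i * ((star W * σ * W) i i).re := by
    have h1 := congrArg (fun M => ((M * σ).trace).re) hrep
    rw [h1, sand_mul_trace_eq hW, Complex.re_sum]
    refine Finset.sum_congr rfl fun i _ => ?_
    rw [Complex.re_ofReal_mul]
  have hent : ∀ i, 0 ≤ ((star W * σ * W) i i).re := by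
    intro i
    have he : (star W * σ * W) i i = star (fun x => W x i) ⬝ᵥ (σ *ᵥ (fun x => W x i)) := by
      rw [Matrix.star_eq_conjTranspose]
      exact entry_conj_sandwich W σ i
    rw [he]
    have := hσ.dotProduct_mulVec_nonneg (fun x => W x i)
    rw [Complex.le_def] at this
    simpa using this.1
  have hWW : W * star W = 1 := Matrix.mem_unitaryGroup_iff.mp hW
  have htrW : ∑ j, ((star W * σ * W) j j).re = (σ.trace).re := by
    have h1 : (star W * σ * W).trace = σ.trace := by
      rw [Matrix.trace_mul_cycle, hWW, Matrix.one_mul]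
    rw [← h1, Matrix.trace]
    rw [Complex.re_sum]
    rfl
  have hbound : ∀ i, ((star W * σ * W) i i).re ≤ (σ.trace).re := by
    intro i
    rw [← htrW]
    exact Finset.single_le_sum (fun j _ => hent j) (Finset.mem_univ i)
  have htrρ : (ρ.trace).re = ∑ i, l i := by
    have h1 := congrArg (fun M => (M.trace).re) hrep
    rw [h1, sand_trace hW]
    exact Complex.ofReal_re _
  rw [htr, htrρ, Finset.sum_mul]
  refine Finset.sum_le_sum fun i _ => ?_
  exact mul_le_mul_of_nonneg_left (hbound i) (hl i)

lemma fidelity_le_card {ρ σ : Matrix n n ℂ} (hρ : ρ.PosSemidef) (hσ : σ.PosSemidef)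
    (h1 : (ρ.trace).re = 1) (h2 : (σ.trace).re = 1) :
    fidelity ρ σ ≤ (Fintype.card n : ℝ) := by
  rw [fidelity_of_psd hρ hσ]
  set hQ := hσ.mul_mul_conjTranspose_same (posSemidefSqrt hρ) with hQdef
  have hs : ((posSemidefSqrt hQ).trace).re = ∑ i, Real.sqrt (specL hQ i) := by
    rw [psd_sqrt_eq hQ,
      show sqrtOf (specU hQ) (specL hQ)
        = sand (specU hQ) (fun i => Real.sqrt (specL hQ i)) from rfl,
      sand_trace (specU_mem hQ)]
    exact Complex.ofReal_re _
  rw [hs]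
  have hCS : (∑ i, Real.sqrt (specL hQ i)) ^ 2
      ≤ (Fintype.card n : ℝ) * ∑ i, specL hQ i := by
    have h := Finset.sum_mul_sq_le_sq_mul_sq Finset.univ (fun _ : n => (1:ℝ))
      (fun i => Real.sqrt (specL hQ i))
    simp only [one_mul, one_pow, Finset.sum_const, Finset.card_univ, nsmul_eq_mul,
      mul_one] at h
    calc (∑ i, Real.sqrt (specL hQ i)) ^ 2
        ≤ (Fintype.card n : ℝ) * ∑ i, Real.sqrt (specL hQ i) ^ 2 := h
      _ = (Fintype.card n : ℝ) * ∑ i, specL hQ i := by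
          congr 1
          exact Finset.sum_congr rfl fun i _ => Real.sq_sqrt (specL_nonneg hQ i)
  have htrQ : ∑ i, specL hQ i = (((posSemidefSqrt hρ * σ * (posSemidefSqrt hρ)ᴴ)).trace).re := by
    have hh := congrArg (fun M => (M.trace).re) (psd_eq_sand hQ)
    rw [hh, sand_trace (specU_mem hQ)]
    exact (Complex.ofReal_re _).symm
  have htrQ2 : (((posSemidefSqrt hρ * σ * (posSemidefSqrt hρ)ᴴ)).trace).re ≤ 1 := by
    have hAh : (posSemidefSqrt hρ)ᴴ = posSemidefSqrt hρ := (psdSqrt_psd hρ).1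
    have hcyc : (posSemidefSqrt hρ * σ * (posSemidefSqrt hρ)ᴴ).trace = (ρ * σ).trace := by
      rw [Matrix.trace_mul_cycle, hAh, psdSqrt_mul_self hρ]
    rw [hcyc]
    calc ((ρ * σ).trace).re ≤ (ρ.trace).re * (σ.trace).re := psd_pair_trace hρ hσ
      _ = 1 := by rw [h1, h2, mul_one]
  calc (∑ i, Real.sqrt (specL hQ i)) ^ 2 ≤ (Fintype.card n : ℝ) * ∑ i, specL hQ i := hCS
    _ ≤ (Fintype.card n : ℝ) * 1 := by
        refine mul_le_mul_of_nonneg_left ?_ (Nat.cast_nonneg _)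
        rw [htrQ]; exact htrQ2
    _ = (Fintype.card n : ℝ) := mul_one _

end Fid
section SchmidtFacts

lemma inSchmidt_psd {a b k : ℕ} {σ : Matrix (Fin a × Fin b) (Fin a × Fin b) ℂ}
    (h : InSchmidtClass k σ) : σ.PosSemidef := by
  obtain ⟨m, q, v, hq, -, -, -, rfl⟩ := h
  exact psd_sum _ fun i => psd_real_smul (outer_posSemidef _) (hq i)

lemma inSchmidt_trace_re {a b k : ℕ} {σ : Matrix (Fin a × Fin b) (Fin a × Fin b) ℂ}
    (h : InSchmidtClass k σ) : (σ.trace).re = 1 := by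
  obtain ⟨m, q, v, hq, hqs, hnorm, -, rfl⟩ := h
  rw [Matrix.trace_sum]
  have h1 : ∀ i, ((q i : ℂ) • outer (v i)).trace = ((q i : ℝ) : ℂ) := by
    intro i
    rw [Matrix.trace_smul, outer_trace, show nsq (v i) = 1 from hnorm i]
    simp
  rw [Finset.sum_congr rfl fun i _ => h1 i, ← Complex.ofReal_sum, hqs]
  simp

lemma inSchmidt_of_family {a b k : ℕ} {γ : Type*} [Fintype γ]
    (q : γ → ℝ) (v : γ → (Fin a × Fin b → ℂ))
    (hq : ∀ c, 0 ≤ q c) (hqs : ∑ c, q c = 1)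
    (hnorm : ∀ c, ∑ x, ‖v c x‖ ^ 2 = 1)
    (hrank : ∀ c, (coeffMat (v c)).rank ≤ k) :
    InSchmidtClass k (∑ c, (q c : ℂ) • outer (v c)) := by
  let e := (Fintype.equivFin γ).symm
  refine ⟨Fintype.card γ, q ∘ e, v ∘ e, fun i => hq _, ?_, fun i => hnorm _,
    fun i => hrank _, ?_⟩
  · rw [show ∑ i, (q ∘ e) i = ∑ c, q c from Equiv.sum_comp e q]
    exact hqs
  · exact (Equiv.sum_comp e fun c => (q c : ℂ) • outer (v c)).symm

end SchmidtFacts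

section GramConstr

variable {n γ : Type*} [Fintype n] [Fintype γ]

lemma mk_gram (w : γ → ℝ) (hw : ∀ c, 0 ≤ w c) (f : γ → n → ℂ) :
    (Matrix.of fun (x : n) (c : γ) => ((Real.sqrt (w c) : ℂ) * f c x)) *
    (Matrix.of fun (x : n) (c : γ) => ((Real.sqrt (w c) : ℂ) * f c x))ᴴ
      = ∑ c, (w c : ℂ) • outer (f c) := by
  ext x y
  simp only [Matrix.mul_apply, Matrix.conjTranspose_apply, Matrix.of_apply,
    Matrix.sum_apply, Matrix.smul_apply, outer, Matrix.vecMulVec_apply, Pi.star_apply,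
    Complex.star_def, smul_eq_mul]
  refine Finset.sum_congr rfl fun c _ => ?_
  rw [_root_.map_mul, Complex.conj_ofReal]
  calc (Real.sqrt (w c) : ℂ) * f c x * ((Real.sqrt (w c) : ℂ) * (starRingEnd ℂ) (f c y))
      = ((Real.sqrt (w c) : ℂ) * (Real.sqrt (w c) : ℂ)) * (f c x * (starRingEnd ℂ) (f c y)) := by
        ring
    _ = (w c : ℂ) * (f c x * (starRingEnd ℂ) (f c y)) := by
        rw [← Complex.ofReal_mul, Real.mul_self_sqrt (hw c)]

lemma gram_inner_trace (f g : γ → n → ℂ) :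
    (((Matrix.of fun (x : n) (c : γ) => f c x)ᴴ *
      (Matrix.of fun (x : n) (c : γ) => g c x)).trace)
      = ∑ c, star (f c) ⬝ᵥ g c := by
  simp only [Matrix.trace, Matrix.diag, Matrix.mul_apply, Matrix.conjTranspose_apply,
    Matrix.of_apply, dotProduct, Pi.star_apply]

end GramConstr

/-- for any pure-state decomposition `ρ = ∑ pᵢ |ψᵢ⟩⟨ψᵢ|` of a bipartite
density operator, `F_k(ρ) ≥ ∑ pᵢ F_k(ψᵢ)`. -/
theorem schmidtFidelity_ge_avg {a b k : ℕ} {ι : Type} [Fintype ι]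
    (ρ : Matrix (Fin a × Fin b) (Fin a × Fin b) ℂ)
    (p : ι → ℝ) (ψ : ι → (Fin a × Fin b → ℂ))
    (hp : ∀ i, 0 ≤ p i) (hps : ∑ i, p i = 1)
    (hunit : ∀ i, ∑ q, ‖ψ i q‖ ^ 2 = 1)
    (hdecomp : ρ = ∑ i, (p i : ℂ) • outer (ψ i)) :
    schmidtFidelity k ρ ≥ ∑ i, p i * schmidtFidelity k (outer (ψ i)) := by
  classical
  have hψn : ∀ i, nsq (ψ i) = 1 := fun i => hunit i
  have hρpsd : ρ.PosSemidef := by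
    rw [hdecomp]
    exact psd_sum _ fun i => psd_real_smul (outer_posSemidef _) (hp i)
  have hρtr : (ρ.trace).re = 1 := by
    rw [hdecomp, Matrix.trace_sum]
    have h1 : ∀ i, ((p i : ℂ) • outer (ψ i)).trace = ((p i : ℝ) : ℂ) := by
      intro i
      rw [Matrix.trace_smul, outer_trace, hψn i]
      simp
    rw [Finset.sum_congr rfl fun i _ => h1 i, ← Complex.ofReal_sum, hps]
    simp
  by_cases hex : ∃ σ0 : Matrix (Fin a × Fin b) (Fin a × Fin b) ℂ, InSchmidtClass k σ0
  case neg =>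
    have h0 : ∀ X : Matrix (Fin a × Fin b) (Fin a × Fin b) ℂ, schmidtFidelity k X = 0 := by
      intro X
      unfold schmidtFidelity
      rw [show {x : ℝ | ∃ σ, InSchmidtClass k σ ∧ x = fidelity X σ} = ∅ from
        Set.eq_empty_iff_forall_notMem.mpr (by rintro x ⟨σ, hσ, -⟩; exact hex ⟨σ, hσ⟩),
        Real.sSup_empty]
    rw [h0]
    simp [h0]
  case pos =>
  obtain ⟨σ0, hσ0⟩ := hex
  have hbdd : BddAbove {x : ℝ | ∃ σ, InSchmidtClass k σ ∧ x = fidelity ρ σ} := by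
    refine ⟨(Fintype.card (Fin a × Fin b) : ℝ), ?_⟩
    rintro x ⟨σ, hσ, rfl⟩
    exact fidelity_le_card hρpsd (inSchmidt_psd hσ) hρtr (inSchmidt_trace_re hσ)
  have hne : ∀ X : Matrix (Fin a × Fin b) (Fin a × Fin b) ℂ,
      {x : ℝ | ∃ σ, InSchmidtClass k σ ∧ x = fidelity X σ}.Nonempty :=
    fun X => ⟨fidelity X σ0, σ0, hσ0, rfl⟩
  rw [ge_iff_le]
  refine le_of_forall_pos_le_add fun ε hε => ?_
  have hch : ∀ i : ι, ∃ σi, InSchmidtClass k σi ∧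
      schmidtFidelity k (outer (ψ i)) - ε < fidelity (outer (ψ i)) σi := by
    intro i
    have hlt : schmidtFidelity k (outer (ψ i)) - ε
        < sSup {x : ℝ | ∃ σ, InSchmidtClass k σ ∧ x = fidelity (outer (ψ i)) σ} := by
      have heq : schmidtFidelity k (outer (ψ i))
          = sSup {x : ℝ | ∃ σ, InSchmidtClass k σ ∧ x = fidelity (outer (ψ i)) σ} := rfl
      linarith
    obtain ⟨x, hxmem, hxlt⟩ := exists_lt_of_lt_csSup (hne _) hlt
    obtain ⟨σi, hσi, rfl⟩ := hxmem
    exact ⟨σi, hσi, hxlt⟩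
  choose σs hσs hσlt using hch
  choose mm qq vv hq hqs hnorm hrank hrep using fun i => (hσs i)
  set w : (Σ i : ι, Fin (mm i)) → ℝ := fun c => p c.1 * qq c.1 c.2 with hwdef
  set φ : (Σ i : ι, Fin (mm i)) → (Fin a × Fin b → ℂ) := fun c => vv c.1 c.2 with hφdef
  set tt : (Σ i : ι, Fin (mm i)) → ℂ := fun c => star (ψ c.1) ⬝ᵥ φ c with httdef
  set Nt : ℝ := ∑ c, w c * ‖tt c‖ ^ 2 with hNtdef
  have hw0 : ∀ c, 0 ≤ w c := fun c => mul_nonneg (hp c.1) (hq c.1 c.2)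
  have hterm0 : ∀ c, 0 ≤ w c * ‖tt c‖ ^ 2 :=
    fun c => mul_nonneg (hw0 c) (sq_nonneg _)
  have hNt0 : 0 ≤ Nt := Finset.sum_nonneg fun c _ => hterm0 c
  have hFi : ∀ i, fidelity (outer (ψ i)) (σs i)
      = ∑ j, qq i j * ‖star (ψ i) ⬝ᵥ vv i j‖ ^ 2 := by
    intro i
    rw [fidelity_pure (hψn i) (inSchmidt_psd (hσs i)), hrep i, quad_sum_outer]
    exact Complex.ofReal_re _
  have hNt : Nt = ∑ i, p i * fidelity (outer (ψ i)) (σs i) := by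
    rw [hNtdef, ← Finset.univ_sigma_univ, Finset.sum_sigma]
    refine Finset.sum_congr rfl fun i _ => ?_
    rw [hFi i, Finset.mul_sum]
    refine Finset.sum_congr rfl fun j _ => ?_
    ring
  have hkey : ∃ σstar, InSchmidtClass k σstar ∧ Nt ≤ fidelity ρ σstar := by
    rcases eq_or_lt_of_le hNt0 with hN0 | hNpos
    · exact ⟨σ0, hσ0, by rw [← hN0]; exact fidelity_nonneg ρ σ0⟩
    · set r : (Σ i : ι, Fin (mm i)) → ℝ :=
        fun c => w c * ‖tt c‖ ^ 2 / Nt with hrdef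
      have hr0 : ∀ c, 0 ≤ r c := fun c => div_nonneg (hterm0 c) hNt0
      have hrs : ∑ c, r c = 1 := by
        rw [hrdef, ← Finset.sum_div, ← hNtdef, div_self (ne_of_gt hNpos)]
      set u : (Σ i : ι, Fin (mm i)) → ℂ := fun c =>
        if tt c = 0 then 1 else (starRingEnd ℂ) (tt c) / ((‖tt c‖ : ℝ) : ℂ)
        with hudef
      have hu1 : ∀ c, ‖u c‖ = 1 := by
        intro c
        simp only [hudef]
        by_cases h : tt c = 0
        · simp [h]
        · have h0 : ‖tt c‖ ≠ 0 := norm_ne_zero_iff.mpr h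
          rw [if_neg h, norm_div, Complex.norm_conj,
            Complex.norm_of_nonneg (norm_nonneg _), div_self h0]
      have hut : ∀ c, u c * tt c = ((‖tt c‖ : ℝ) : ℂ) := by
        intro c
        simp only [hudef]
        by_cases h : tt c = 0
        · simp [h]
        · have h0 : ‖tt c‖ ≠ 0 := norm_ne_zero_iff.mpr h
          rw [if_neg h, div_mul_eq_mul_div, mul_comm ((starRingEnd ℂ) (tt c)) (tt c),
            Complex.mul_conj, Complex.normSq_eq_norm_sq, ← Complex.ofReal_div, sq,
            mul_div_assoc, div_self h0, mul_one]
      -- the matrices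
      set M : Matrix (Fin a × Fin b) (Σ i : ι, Fin (mm i)) ℂ :=
        Matrix.of fun x c => ((Real.sqrt (w c) : ℂ) * ψ c.1 x) with hM
      set Nm : Matrix (Fin a × Fin b) (Σ i : ι, Fin (mm i)) ℂ :=
        Matrix.of fun x c => ((Real.sqrt (r c) : ℂ) * (u c • φ c) x) with hNm
      set σstar : Matrix (Fin a × Fin b) (Fin a × Fin b) ℂ :=
        ∑ c, (r c : ℂ) • outer (φ c) with hσstardef
      have hσstar : InSchmidtClass k σstar :=
        inSchmidt_of_family r φ hr0 hrs (fun c => hnorm c.1 c.2) (fun c => hrank c.1 c.2)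
      have hMM : M * Mᴴ = ρ := by
        rw [hM, mk_gram w hw0 (fun c => ψ c.1), hdecomp, ← Finset.univ_sigma_univ,
          Finset.sum_sigma]
        refine Finset.sum_congr rfl fun i _ => ?_
        dsimp only
        rw [← Finset.sum_smul]
        congr 1
        simp only [hwdef, Complex.ofReal_mul]
        rw [← Finset.mul_sum, ← Complex.ofReal_sum, hqs i]
        simp
      have hNN : Nm * Nmᴴ = σstar := by
        rw [hNm, mk_gram r hr0 (fun c => u c • φ c), hσstardef]
        exact Finset.sum_congr rfl fun c _ => by rw [outer_smul_unit (u c) (hu1 c) (φ c)]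
      have htrace : ((Mᴴ * Nm).trace) = ((Real.sqrt Nt : ℝ) : ℂ) := by
        have h1 : (Mᴴ * Nm).trace
            = ∑ c, ((Real.sqrt (w c) : ℂ) * (Real.sqrt (r c) : ℂ) * u c) * tt c := by
          rw [hM, hNm, gram_inner_trace]
          refine Finset.sum_congr rfl fun c _ => ?_
          have e0 : tt c = star (ψ c.1) ⬝ᵥ φ c := rfl
          rw [e0]
          simp only [dotProduct, Pi.star_apply, Pi.smul_apply, smul_eq_mul,
            Complex.star_def, _root_.map_mul, Complex.conj_ofReal, Finset.mul_sum]
          refine Finset.sum_congr rfl fun x _ => ?_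
          ring
        rw [h1]
        have h2 : ∀ c, ((Real.sqrt (w c) : ℂ) * (Real.sqrt (r c) : ℂ) * u c) * tt c
            = ((Real.sqrt (w c) * Real.sqrt (r c) * ‖tt c‖ : ℝ) : ℂ) := by
          intro c
          rw [mul_assoc, hut c]
          push_cast
          ring
        rw [Finset.sum_congr rfl fun c _ => h2 c, ← Complex.ofReal_sum]
        congr 1
        have h3 : ∀ c, Real.sqrt (w c) * Real.sqrt (r c) * ‖tt c‖
            = w c * ‖tt c‖ ^ 2 / Real.sqrt Nt := by
          intro c
          simp only [hrdef]
          rw [Real.sqrt_div (hterm0 c), Real.sqrt_mul (hw0 c),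
            Real.sqrt_sq (norm_nonneg _)]
          calc Real.sqrt (w c) * (Real.sqrt (w c) * ‖tt c‖ / Real.sqrt Nt)
                * ‖tt c‖
              = (Real.sqrt (w c) * Real.sqrt (w c))
                  * (‖tt c‖ * ‖tt c‖) / Real.sqrt Nt := by ring
            _ = w c * ‖tt c‖ ^ 2 / Real.sqrt Nt := by
                rw [Real.mul_self_sqrt (hw0 c), ← sq]
        rw [Finset.sum_congr rfl fun c _ => h3 c, ← Finset.sum_div, ← hNtdef,
          Real.div_sqrt]
      have hfg : Real.sqrt Nt ≤ ((Mᴴ * Nm).trace).re := by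
        rw [htrace]; exact le_of_eq (Complex.ofReal_re _).symm
      have := fidelity_ge_sq hρpsd (inSchmidt_psd hσstar) hMM hNN (Real.sqrt Nt)
        (Real.sqrt_nonneg _) hfg
      rw [Real.sq_sqrt hNt0] at this
      exact ⟨σstar, hσstar, this⟩
  obtain ⟨σstar, hσstar, hge⟩ := hkey
  have hfin : Nt ≤ sSup {x : ℝ | ∃ σ, InSchmidtClass k σ ∧ x = fidelity ρ σ} :=
    le_trans hge (le_csSup hbdd ⟨σstar, hσstar, rfl⟩)
  have hgoal : schmidtFidelity k ρ
      = sSup {x : ℝ | ∃ σ, InSchmidtClass k σ ∧ x = fidelity ρ σ} := rfl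
  calc ∑ i, p i * schmidtFidelity k (outer (ψ i))
      ≤ ∑ i, p i * (fidelity (outer (ψ i)) (σs i) + ε) := by
        refine Finset.sum_le_sum fun i _ => ?_
        refine mul_le_mul_of_nonneg_left ?_ (hp i)
        linarith [hσlt i]
    _ = (∑ i, p i * fidelity (outer (ψ i)) (σs i)) + ε := by
        simp only [mul_add]
        rw [Finset.sum_add_distrib, ← Finset.sum_mul, hps, one_mul]
    _ = Nt + ε := by rw [hNt]
    _ ≤ schmidtFidelity k ρ + ε := by rw [hgoal]; linarith [hfin]
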